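/- Let ℓ, γ, m ∈ ℕ with γ ≥ 1, identify the state space with (ℝ^ℓ)^γ writing x = (ζ₁,…,ζ_γ), let f_γ : (ℝ^ℓ)^γ → ℝ^ℓ and g_γ : (ℝ^ℓ)^γ → Matrix (Fin ℓ) (Fin m) ℝ, and define V(x,u) ∈ (ℝ^ℓ)^γ by V(x,u)_i = ζ_{i+1} for 1 ≤ i ≤ γ−1 and V(x,u)_γ = f_γ(x) + g_γ(x)·u. Let q ∈ ℕ with 1 ≤ q ≤ γ, set p = γ − q + 1, fix h > 0, weights b₁,…,b_p ∈ ℝ with Σᵢ bᵢ = 1 and coefficients a_{i,j} ∈ ℝ (1 ≤ j < i ≤ p), and let F^{a,p}_h(x,u) = x + h Σ_{i=1}^{p} bᵢ V(zᵢ,u) with z₁ = x and zᵢ = x + h Σ_{j=1}^{i−1} a_{i,j} V(z_j,u). Then for every fixed x ∈ (ℝ^ℓ)^γ: the blocks (F^{a,p}_h(x,u))_i for i ∈ {1,…,q−1} do not depend on u, and the block u ↦ (F^{a,p}_h(x,u))_q is an affine function of u ∈ ℝᵐ. -/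

import Mathlib

/-- Matrix–vector multiplication as a map between Euclidean spaces. -/
noncomputable def mulVecE {n m : ℕ} (g : Matrix (Fin n) (Fin m) ℝ)
    (u : EuclideanSpace ℝ (Fin m)) : EuclideanSpace ℝ (Fin n) :=
  (WithLp.equiv 2 (Fin n → ℝ)).symm (g.mulVec ((WithLp.equiv 2 (Fin m → ℝ)) u))

/-- The controlled block chain-of-integrators vector field:
`V(x,u)_i = x_{i+1}` for `i < γ−1` and `V(x,u)_{γ−1} = f_γ(x) + g_γ(x)·u` (0-indexed). -/
noncomputable def chainVF {ℓ γ m : ℕ}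
    (fγ : (Fin γ → EuclideanSpace ℝ (Fin ℓ)) → EuclideanSpace ℝ (Fin ℓ))
    (gγ : (Fin γ → EuclideanSpace ℝ (Fin ℓ)) → Matrix (Fin ℓ) (Fin m) ℝ)
    (x : Fin γ → EuclideanSpace ℝ (Fin ℓ)) (u : EuclideanSpace ℝ (Fin m)) :
    Fin γ → EuclideanSpace ℝ (Fin ℓ) :=
  fun i => if hi : (i : ℕ) + 1 < γ then x ⟨(i : ℕ) + 1, hi⟩ else fγ x + mulVecE (gγ x) u

/-- Runge–Kutta stage points (0-indexed): `z 0 = x`,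
`z i = x + h • Σ_{j<i} a i j • v j (z j)`. -/
noncomputable def rkStages {S : Type*} [AddCommGroup S] [Module ℝ S]
    (v : ℕ → S → S) (a : ℕ → ℕ → ℝ) (h : ℝ) (x : S) : ℕ → S :=
  fun i => Nat.strongRec (fun i ih =>
    x + h • ∑ j ∈ (Finset.range i).attach, a i j.1 • v j.1 (ih j.1 (Finset.mem_range.mp j.2))) i

/-- The `p`-stage Runge–Kutta map for the block chain-of-integrators dynamics. -/
noncomputable def rkMapChain {ℓ γ m : ℕ}
    (fγ : (Fin γ → EuclideanSpace ℝ (Fin ℓ)) → EuclideanSpace ℝ (Fin ℓ))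
    (gγ : (Fin γ → EuclideanSpace ℝ (Fin ℓ)) → Matrix (Fin ℓ) (Fin m) ℝ)
    (p : ℕ) (b : ℕ → ℝ) (a : ℕ → ℕ → ℝ) (h : ℝ)
    (x : Fin γ → EuclideanSpace ℝ (Fin ℓ)) (u : EuclideanSpace ℝ (Fin m)) :
    Fin γ → EuclideanSpace ℝ (Fin ℓ) :=
  x + h • ∑ i ∈ Finset.range p,
    b i • chainVF fγ gγ (rkStages (fun _ z => chainVF fγ gγ z u) a h x i) u

/-! ### Auxiliary lemmas -/

lemma rkStages_eq {S : Type*} [AddCommGroup S] [Module ℝ S]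
    (v : ℕ → S → S) (a : ℕ → ℕ → ℝ) (h : ℝ) (x : S) (i : ℕ) :
    rkStages v a h x i =
      x + h • ∑ j ∈ Finset.range i, a i j • v j (rkStages v a h x j) := by
  conv_lhs => rw [rkStages]
  rw [Nat.strongRec_eq, ← Finset.sum_attach (Finset.range i)
    (fun j => a i j • v j (rkStages v a h x j))]
  rfl

lemma rkStages_zero {S : Type*} [AddCommGroup S] [Module ℝ S]
    (v : ℕ → S → S) (a : ℕ → ℕ → ℝ) (h : ℝ) (x : S) :
    rkStages v a h x 0 = x := by
  rw [rkStages_eq]; simp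

lemma chainVF_apply_lt {ℓ γ m : ℕ}
    (fγ : (Fin γ → EuclideanSpace ℝ (Fin ℓ)) → EuclideanSpace ℝ (Fin ℓ))
    (gγ : (Fin γ → EuclideanSpace ℝ (Fin ℓ)) → Matrix (Fin ℓ) (Fin m) ℝ)
    (z : Fin γ → EuclideanSpace ℝ (Fin ℓ)) (u : EuclideanSpace ℝ (Fin m))
    {k : ℕ} (hk : k < γ) (hk1 : k + 1 < γ) :
    chainVF fγ gγ z u ⟨k, hk⟩ = z ⟨k + 1, hk1⟩ := dif_pos hk1

lemma chainVF_apply_last {ℓ γ m : ℕ}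
    (fγ : (Fin γ → EuclideanSpace ℝ (Fin ℓ)) → EuclideanSpace ℝ (Fin ℓ))
    (gγ : (Fin γ → EuclideanSpace ℝ (Fin ℓ)) → Matrix (Fin ℓ) (Fin m) ℝ)
    (z : Fin γ → EuclideanSpace ℝ (Fin ℓ)) (u : EuclideanSpace ℝ (Fin m))
    {k : ℕ} (hk : k < γ) (hk1 : ¬ k + 1 < γ) :
    chainVF fγ gγ z u ⟨k, hk⟩ = fγ z + mulVecE (gγ z) u := dif_neg hk1

/-- Matrix–vector multiplication as a linear map between Euclidean spaces. -/
noncomputable def mulVecELin {n m : ℕ} (g : Matrix (Fin n) (Fin m) ℝ) :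
    EuclideanSpace ℝ (Fin m) →ₗ[ℝ] EuclideanSpace ℝ (Fin n) where
  toFun := mulVecE g
  map_add' u v := by
    simp [mulVecE, WithLp.ofLp_add, Matrix.mulVec_add, WithLp.toLp_add]
  map_smul' c u := by
    simp [mulVecE, WithLp.ofLp_smul, Matrix.mulVec_smul, WithLp.toLp_smul]

/-- Blocks `k` with `k + i + 1 ≤ γ` of the `i`-th stage do not depend on `u`. -/
lemma stages_const {ℓ γ m : ℕ}
    (fγ : (Fin γ → EuclideanSpace ℝ (Fin ℓ)) → EuclideanSpace ℝ (Fin ℓ))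
    (gγ : (Fin γ → EuclideanSpace ℝ (Fin ℓ)) → Matrix (Fin ℓ) (Fin m) ℝ)
    (a : ℕ → ℕ → ℝ) (h : ℝ) (x : Fin γ → EuclideanSpace ℝ (Fin ℓ))
    (i : ℕ) :
    ∀ k (hkγ : k < γ), k + i + 1 ≤ γ → ∀ u u' : EuclideanSpace ℝ (Fin m),
      rkStages (fun _ z => chainVF fγ gγ z u) a h x i ⟨k, hkγ⟩ =
      rkStages (fun _ z => chainVF fγ gγ z u') a h x i ⟨k, hkγ⟩ := by
  induction i using Nat.strong_induction_on with
  | _ i ih =>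
    intro k hkγ hk u u'
    rw [rkStages_eq, rkStages_eq]
    simp only [Pi.add_apply, Pi.smul_apply, Finset.sum_apply]
    congr 2
    refine Finset.sum_congr rfl fun j hj => ?_
    have hj' := Finset.mem_range.mp hj
    have hk1 : k + 1 < γ := by omega
    rw [chainVF_apply_lt fγ gγ _ u hkγ hk1, chainVF_apply_lt fγ gγ _ u' hkγ hk1,
      ih j hj' (k + 1) hk1 (by omega) u u']

/-- Block `k` with `k + i = γ` of the `i`-th stage depends affinely on `u`. -/
lemma stages_affine {ℓ γ m : ℕ}
    (fγ : (Fin γ → EuclideanSpace ℝ (Fin ℓ)) → EuclideanSpace ℝ (Fin ℓ))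
    (gγ : (Fin γ → EuclideanSpace ℝ (Fin ℓ)) → Matrix (Fin ℓ) (Fin m) ℝ)
    (a : ℕ → ℕ → ℝ) (h : ℝ) (x : Fin γ → EuclideanSpace ℝ (Fin ℓ))
    (i : ℕ) :
    ∀ k (hkγ : k < γ), k + i = γ →
      ∃ c : EuclideanSpace ℝ (Fin ℓ), ∃ t : ℝ, ∀ u : EuclideanSpace ℝ (Fin m),
        rkStages (fun _ z => chainVF fγ gγ z u) a h x i ⟨k, hkγ⟩ =
          c + t • mulVecE (gγ x) u := by
  induction i using Nat.strong_induction_on with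
  | _ i ih =>
    intro k hkγ hk
    obtain ⟨i', rfl⟩ : ∃ i', i = i' + 1 := ⟨i - 1, by omega⟩
    by_cases hk1 : k + 1 < γ
    · obtain ⟨c, t, hct⟩ := ih i' (by omega) (k + 1) hk1 (by omega)
      refine ⟨x ⟨k, hkγ⟩ + h • ((∑ j ∈ Finset.range i', a (i' + 1) j •
          rkStages (fun _ z => chainVF fγ gγ z 0) a h x j ⟨k + 1, hk1⟩)
          + a (i' + 1) i' • c), h * (a (i' + 1) i' * t), ?_⟩
      intro u
      rw [rkStages_eq]
      simp only [Pi.add_apply, Pi.smul_apply, Finset.sum_apply]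
      rw [Finset.sum_range_succ, chainVF_apply_lt fγ gγ _ u hkγ hk1, hct u,
        Finset.sum_congr rfl (fun j hj => ?_)]
      · module
      · have hj' := Finset.mem_range.mp hj
        rw [chainVF_apply_lt fγ gγ _ u hkγ hk1,
          stages_const fγ gγ a h x j (k + 1) hk1 (by omega) u 0]
    · have hi0 : i' = 0 := by omega
      subst hi0
      refine ⟨x ⟨k, hkγ⟩ + (h * a 1 0) • fγ x, h * a 1 0, fun u => ?_⟩
      rw [rkStages_eq]
      simp only [Pi.add_apply, Pi.smul_apply, Finset.sum_apply]
      rw [Finset.sum_range_one, rkStages_zero, chainVF_apply_last fγ gγ x u hkγ hk1]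
      module

theorem stmt17 {ℓ γ m : ℕ} (hγ : 1 ≤ γ)
    (fγ : (Fin γ → EuclideanSpace ℝ (Fin ℓ)) → EuclideanSpace ℝ (Fin ℓ))
    (gγ : (Fin γ → EuclideanSpace ℝ (Fin ℓ)) → Matrix (Fin ℓ) (Fin m) ℝ)
    (q : ℕ) (hq1 : 1 ≤ q) (hqγ : q ≤ γ) (p : ℕ) (hpdef : p = γ - q + 1)
    (h : ℝ) (hh : 0 < h)
    (b : ℕ → ℝ) (hbsum : ∑ i ∈ Finset.range p, b i = 1) (a : ℕ → ℕ → ℝ)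
    (x : Fin γ → EuclideanSpace ℝ (Fin ℓ)) :
    (∀ i : Fin γ, (i : ℕ) < q - 1 → ∀ u u' : EuclideanSpace ℝ (Fin m),
      rkMapChain fγ gγ p b a h x u i = rkMapChain fγ gγ p b a h x u' i) ∧
    ∃ w0 : EuclideanSpace ℝ (Fin ℓ),
      ∃ W : EuclideanSpace ℝ (Fin m) →ₗ[ℝ] EuclideanSpace ℝ (Fin ℓ),
        ∀ u : EuclideanSpace ℝ (Fin m),
          rkMapChain fγ gγ p b a h x u ⟨q - 1, by omega⟩ = w0 + W u := by
  obtain ⟨q', rfl⟩ : ∃ q', q = q' + 1 := ⟨q - 1, by omega⟩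
  constructor
  · rintro ⟨k, hkγ⟩ hkq u u'
    simp only at hkq
    have hkq' : k < q' := by omega
    unfold rkMapChain
    simp only [Pi.add_apply, Pi.smul_apply, Finset.sum_apply]
    congr 2
    refine Finset.sum_congr rfl fun j hj => ?_
    have hj' := Finset.mem_range.mp hj
    have hk1 : k + 1 < γ := by omega
    rw [chainVF_apply_lt fγ gγ _ u hkγ hk1, chainVF_apply_lt fγ gγ _ u' hkγ hk1,
      stages_const fγ gγ a h x j (k + 1) hk1 (by omega) u u']
  · have hq'γ : q' < γ := by omega
    simp only [Nat.add_sub_cancel]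
    by_cases hk1 : q' + 1 < γ
    · -- q < γ : the last stage used at block q' is stage p - 1 = γ - q
      obtain ⟨p', rfl⟩ : ∃ p', p = p' + 1 := ⟨p - 1, by omega⟩
      have hp' : p' = γ - (q' + 1) := by omega
      obtain ⟨c, t, hct⟩ := stages_affine fγ gγ a h x p' (q' + 1) hk1 (by omega)
      refine ⟨x ⟨q', hq'γ⟩ + h • ((∑ j ∈ Finset.range p', b j •
          rkStages (fun _ z => chainVF fγ gγ z 0) a h x j ⟨q' + 1, hk1⟩)
          + b p' • c), (h * (b p' * t)) • mulVecELin (gγ x), fun u => ?_⟩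
      unfold rkMapChain
      simp only [Pi.add_apply, Pi.smul_apply, Finset.sum_apply, LinearMap.smul_apply]
      rw [Finset.sum_range_succ, chainVF_apply_lt fγ gγ _ u hq'γ hk1, hct u,
        Finset.sum_congr rfl (fun j hj => ?_)]
      · show _ = _ + (h * (b p' * t)) • mulVecE (gγ x) u
        module
      · have hj' := Finset.mem_range.mp hj
        rw [chainVF_apply_lt fγ gγ _ u hq'γ hk1,
          stages_const fγ gγ a h x j (q' + 1) hk1 (by omega) u 0]
    · -- q = γ : single stage
      have hp1 : p = 1 := by omega
      subst hp1
      refine ⟨x ⟨q', hq'γ⟩ + (h * b 0) • fγ x, (h * b 0) • mulVecELin (gγ x), fun u => ?_⟩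
      unfold rkMapChain
      simp only [Pi.add_apply, Pi.smul_apply, Finset.sum_apply, LinearMap.smul_apply]
      rw [Finset.sum_range_one, rkStages_zero, chainVF_apply_last fγ gγ x u hq'γ hk1]
      show _ = _ + (h * b 0) • mulVecE (gγ x) u
      module
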